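/- Let F : EuclideanSpace ℝ (Fin d) → ℝ be differentiable with ∇F L-Lipschitz. Let γ ≥ 1, σ > 0, ε > 0, η ≥ 0, and let w, g₀, u₀, u ∈ EuclideanSpace ℝ (Fin d) with w' = w − η·g₀. Suppose: (i) ‖u₀ − ∇F(w)‖ ≤ √d·σ and ‖u − ∇F(w')‖ ≤ √d·σ; (ii) (1+γ)·L·η·‖g₀‖ ≤ ε·√d·σ; (iii) (3 + 2γ + ε)·√d·σ < ‖∇F(w')‖; and (iv) g̃ is the average of a nonempty finite family of vectors each satisfying the selection rule with parameter γ relative to u₀ and u, i.e., |[g_i]_j − [u₀]_j| ≤ γ·|[u]_j − [u₀]_j| for every coordinate j. Then ⟨g̃, ∇F(w')⟩ ≥ (1 − (3 + 2γ + ε)·√d·σ/‖∇F(w')‖)·‖∇F(w')‖² > 0. -/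

import Mathlib

open RealInnerProductSpace

lemma licm_coord_norm_le {d : ℕ} (v w : EuclideanSpace ℝ (Fin d)) (c : ℝ)
    (hc : 0 ≤ c) (h : ∀ j, |v j| ≤ c * |w j|) : ‖v‖ ≤ c * ‖w‖ := by
  rw [EuclideanSpace.norm_eq, EuclideanSpace.norm_eq,
    ← Real.sqrt_sq hc, ← Real.sqrt_mul (by positivity)]
  apply Real.sqrt_le_sqrt
  rw [Finset.mul_sum]
  apply Finset.sum_le_sum
  intro j _
  have := h j
  have h1 : ‖v j‖ = |v j| := rfl
  have h2 : ‖w j‖ = |w j| := rfl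
  rw [h1, h2]
  nlinarith [abs_nonneg (v j), abs_nonneg (w j)]

/-- Deterministic core of Theorem 1 (Byzantine resilience) of the LICM-SGD paper:
under the stated deviation bounds, the screened-and-averaged aggregate `g̃` makes a
positive inner product with the true gradient at the new iterate, with
`sin α = (3 + 2γ + ε)√d·σ / ‖∇F(w')‖`. -/
theorem licm_byzantine_resilience_inner_product
    {ι : Type*} (d : ℕ) (F : EuclideanSpace ℝ (Fin d) → ℝ) (L : ℝ)
    (hF : Differentiable ℝ F)
    (hLip : ∀ x y : EuclideanSpace ℝ (Fin d),
      ‖gradient F x - gradient F y‖ ≤ L * ‖x - y‖)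
    (γ σ ε η : ℝ) (hγ : 1 ≤ γ) (hσ : 0 < σ) (hε : 0 < ε) (hη : 0 ≤ η)
    (w g₀ u₀ u : EuclideanSpace ℝ (Fin d))
    (w' : EuclideanSpace ℝ (Fin d)) (hw' : w' = w - η • g₀)
    (hu₀ : ‖u₀ - gradient F w‖ ≤ Real.sqrt d * σ)
    (hu : ‖u - gradient F w'‖ ≤ Real.sqrt d * σ)
    (hsmall : (1 + γ) * L * η * ‖g₀‖ ≤ ε * (Real.sqrt d * σ))
    (hgrad : (3 + 2 * γ + ε) * (Real.sqrt d * σ) < ‖gradient F w'‖)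
    (T : Finset ι) (hT : T.Nonempty) (g : ι → EuclideanSpace ℝ (Fin d))
    (hsel : ∀ i ∈ T, ∀ j : Fin d, |g i j - u₀ j| ≤ γ * |u j - u₀ j|)
    (gt : EuclideanSpace ℝ (Fin d))
    (hgt : gt = (T.card : ℝ)⁻¹ • ∑ i ∈ T, g i) :
    (1 - (3 + 2 * γ + ε) * (Real.sqrt d * σ) / ‖gradient F w'‖)
        * ‖gradient F w'‖ ^ 2 ≤ ⟪gt, gradient F w'⟫ ∧
    0 < (1 - (3 + 2 * γ + ε) * (Real.sqrt d * σ) / ‖gradient F w'‖)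
        * ‖gradient F w'‖ ^ 2 := by
  set D : ℝ := Real.sqrt d * σ with hDdef
  have hD : 0 ≤ D := by positivity
  set G : EuclideanSpace ℝ (Fin d) := gradient F w' with hGdef
  have hnG : 0 < ‖G‖ := lt_of_le_of_lt (by positivity) hgrad
  have hγ0 : (0:ℝ) ≤ γ := le_trans zero_le_one hγ
  -- Lipschitz step
  have hLw : ‖gradient F w - G‖ ≤ L * (η * ‖g₀‖) := by
    have h := hLip w w'
    have hww : w - w' = η • g₀ := by rw [hw']; abel
    rwa [hww, norm_smul, Real.norm_eq_abs, abs_of_nonneg hη] at h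
  have hLw' : 0 ≤ L * (η * ‖g₀‖) := le_trans (norm_nonneg _) hLw
  -- bound on ‖u - u₀‖
  have huu₀ : ‖u - u₀‖ ≤ 2 * D + L * (η * ‖g₀‖) := by
    calc ‖u - u₀‖ = ‖(u - G) + (G - gradient F w) + (gradient F w - u₀)‖ := by
          congr 1; abel
      _ ≤ ‖u - G‖ + ‖G - gradient F w‖ + ‖gradient F w - u₀‖ := norm_add₃_le
      _ ≤ D + L * (η * ‖g₀‖) + D := by
          refine add_le_add (add_le_add hu ?_) ?_
          · rw [norm_sub_rev]; exact hLw
          · rw [norm_sub_rev]; exact hu₀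
      _ = 2 * D + L * (η * ‖g₀‖) := by ring
  -- bound on ‖u₀ - G‖
  have hu₀G : ‖u₀ - G‖ ≤ D + L * (η * ‖g₀‖) := by
    calc ‖u₀ - G‖ = ‖(u₀ - gradient F w) + (gradient F w - G)‖ := by congr 1; abel
      _ ≤ ‖u₀ - gradient F w‖ + ‖gradient F w - G‖ := norm_add_le _ _
      _ ≤ D + L * (η * ‖g₀‖) := add_le_add hu₀ hLw
  -- per-gradient bound
  have hgi : ∀ i ∈ T, ‖g i - G‖ ≤ (3 + 2 * γ + ε) * D := by
    intro i hi
    have h1 : ‖g i - u₀‖ ≤ γ * ‖u - u₀‖ := by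
      apply licm_coord_norm_le _ _ _ hγ0
      intro j
      have := hsel i hi j
      simpa using this
    have hLs : (1 + γ) * (L * (η * ‖g₀‖)) ≤ ε * D := by
      have : (1 + γ) * L * η * ‖g₀‖ = (1 + γ) * (L * (η * ‖g₀‖)) := by ring
      rw [← this]; exact hsmall
    calc ‖g i - G‖ = ‖(g i - u₀) + (u₀ - G)‖ := by congr 1; abel
      _ ≤ ‖g i - u₀‖ + ‖u₀ - G‖ := norm_add_le _ _
      _ ≤ γ * (2 * D + L * (η * ‖g₀‖)) + (D + L * (η * ‖g₀‖)) := by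
          refine add_le_add (h1.trans ?_) hu₀G
          exact mul_le_mul_of_nonneg_left huu₀ hγ0
      _ ≤ (3 + 2 * γ + ε) * D := by nlinarith
  -- averaged bound
  have hgtG : ‖gt - G‖ ≤ (3 + 2 * γ + ε) * D := by
    have hcard : (0:ℝ) < (T.card : ℝ) := by
      exact_mod_cast Finset.card_pos.mpr hT
    have hrep : gt - G = (T.card : ℝ)⁻¹ • ∑ i ∈ T, (g i - G) := by
      rw [Finset.sum_sub_distrib, smul_sub, hgt, Finset.sum_const,
        ← Nat.cast_smul_eq_nsmul ℝ, smul_smul, inv_mul_cancel₀ (ne_of_gt hcard), one_smul]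
    rw [hrep, norm_smul, Real.norm_eq_abs, abs_of_nonneg (by positivity)]
    calc (T.card : ℝ)⁻¹ * ‖∑ i ∈ T, (g i - G)‖
        ≤ (T.card : ℝ)⁻¹ * ∑ i ∈ T, ‖g i - G‖ := by
          exact mul_le_mul_of_nonneg_left (norm_sum_le _ _) (by positivity)
      _ ≤ (T.card : ℝ)⁻¹ * (T.card * ((3 + 2 * γ + ε) * D)) := by
          refine mul_le_mul_of_nonneg_left ?_ (by positivity)
          calc ∑ i ∈ T, ‖g i - G‖ ≤ ∑ _i ∈ T, (3 + 2 * γ + ε) * D :=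
                Finset.sum_le_sum hgi
            _ = T.card * ((3 + 2 * γ + ε) * D) := by
                rw [Finset.sum_const, nsmul_eq_mul]
      _ = (3 + 2 * γ + ε) * D := by field_simp
  -- inner product bound
  have hinner : ‖G‖ ^ 2 - (3 + 2 * γ + ε) * D * ‖G‖ ≤ ⟪gt, G⟫ := by
    have h1 : ⟪gt, G⟫ = ⟪gt - G, G⟫ + ⟪G, G⟫ := by
      rw [inner_sub_left]; ring
    have h2 : |⟪gt - G, G⟫| ≤ ‖gt - G‖ * ‖G‖ := abs_real_inner_le_norm _ _
    have h3 : -((3 + 2 * γ + ε) * D * ‖G‖) ≤ ⟪gt - G, G⟫ := by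
      have := (abs_le.mp h2).1
      have h4 : ‖gt - G‖ * ‖G‖ ≤ (3 + 2 * γ + ε) * D * ‖G‖ :=
        mul_le_mul_of_nonneg_right hgtG (norm_nonneg _)
      linarith
    rw [h1, real_inner_self_eq_norm_sq]
    linarith
  have heq : (1 - (3 + 2 * γ + ε) * D / ‖G‖) * ‖G‖ ^ 2
      = ‖G‖ ^ 2 - (3 + 2 * γ + ε) * D * ‖G‖ := by
    field_simp
  constructor
  · rw [heq]; exact hinner
  · rw [heq]
    nlinarith [hgrad, hnG]
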